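/- Let f : A ⇸ B and g : B ⇸ C be M-morphisms with g dense and multiplicative, where C is a non-degenerate semigroup. Then for any morphism s : X → B⊗C in the category, the composite g₁∘(f₁⊗1)∘(1⊗s) : A⊗X → C depends on s only through g₁∘s; i.e. if g₁∘s = g₁∘s' then g₁∘(f₁⊗1)∘(1⊗s) = g₁∘(f₁⊗1)∘(1⊗s'). -/

import Mathlib

open CategoryTheory Category MonoidalCategory Limits

universe v u

variable {C : Type u} [Category.{v} C] [MonoidalCategory C]

/-- A semigroup multiplication is non-degenerate. -/
def NonDeg (A : C) (m : A ⊗ A ⟶ A) : Prop :=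
  (∀ X Y : C, Function.Injective (fun f : X ⟶ Y ⊗ A =>
      (f ▷ A) ≫ (α_ Y A A).hom ≫ (Y ◁ m))) ∧
  (∀ X Y : C, Function.Injective (fun g : X ⟶ A ⊗ Y =>
      (A ◁ g) ≫ (α_ A A Y).inv ≫ (m ▷ Y)))

/-- Associativity of a semigroup multiplication. -/
def SgAssoc (A : C) (m : A ⊗ A ⟶ A) : Prop :=
  (m ▷ A) ≫ m = (α_ A A A).hom ≫ (A ◁ m) ≫ m

/-- A pair (f₁, f₂) is an `𝕄`-morphism `A ⇸ B`: eq. (2). -/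
def IsMMor {A B : C} (mB : B ⊗ B ⟶ B) (f₁ : A ⊗ B ⟶ B) (f₂ : B ⊗ A ⟶ B) : Prop :=
  (f₂ ▷ B) ≫ mB = (α_ B A B).hom ≫ (B ◁ f₁) ≫ mB

/-- The first component of an `𝕄`-morphism is multiplicative. -/
def Mult₁ {A B : C} (mA : A ⊗ A ⟶ A) (f₁ : A ⊗ B ⟶ B) : Prop :=
  (mA ▷ B) ≫ f₁ = (α_ A A B).hom ≫ (A ◁ f₁) ≫ f₁

/-- The second component of an `𝕄`-morphism is multiplicative. -/
def Mult₂ {A B : C} (mA : A ⊗ A ⟶ A) (f₂ : B ⊗ A ⟶ B) : Prop :=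
  (α_ B A A).hom ≫ (B ◁ mA) ≫ f₂ = (f₂ ▷ A) ≫ f₂

/-- The standing assumptions on the class `Q` of regular epimorphisms. -/
structure QData (C : Type u) [Category.{v} C] [MonoidalCategory C] where
  Q : MorphismProperty C
  regEpi : ∀ ⦃X Y : C⦄ (f : X ⟶ Y), Q f → Nonempty (RegularEpi f)
  comp_mem : ∀ ⦃X Y Z : C⦄ (f : X ⟶ Y) (g : Y ⟶ Z), Q f → Q g → Q (f ≫ g)
  tensor_mem : ∀ ⦃X Y X' Y' : C⦄ (f : X ⟶ Y) (g : X' ⟶ Y'), Q f → Q g → Q (f ⊗ₘ g)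
  iso_mem : ∀ ⦃X Y : C⦄ (f : X ⟶ Y), IsIso f → Q f
  cancel : ∀ ⦃X Y Z : C⦄ (s : X ⟶ Y) (t : Y ⟶ Z), Q s → Q (s ≫ t) → Q t
  coeq : ∀ ⦃X Y : C⦄ (f : X ⟶ Y), Q f →
    ∃ (Z : C) (u v : Z ⟶ X) (h : u ≫ f = v ≫ f),
      Nonempty (IsColimit (Cofork.ofπ f h)) ∧
      (∀ W : C, Nonempty (IsColimit (Cofork.ofπ (f := W ◁ u) (g := W ◁ v) (W ◁ f)
        (by rw [← MonoidalCategory.whiskerLeft_comp, ← MonoidalCategory.whiskerLeft_comp, h])))) ∧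
      (∀ W : C, Nonempty (IsColimit (Cofork.ofπ (f := u ▷ W) (g := v ▷ W) (f ▷ W)
        (by rw [← MonoidalCategory.comp_whiskerRight, ← MonoidalCategory.comp_whiskerRight, h]))))


section Aux
variable {A B Cc X : C}

/-- Whiskering a `Q`-morphism on the right yields an epimorphism. -/
lemma QData.epi_whiskerRight (QD : QData C) {X Y : C} {f : X ⟶ Y} (hf : QD.Q f) (W : C) :
    Epi (f ▷ W) := by
  obtain ⟨Z, u, v, h, -, -, hr⟩ := QD.coeq f hf
  obtain ⟨hcol⟩ := hr W
  constructor
  intro Z' a b hab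
  exact Cofork.IsColimit.hom_ext hcol hab

/-- The inner computation in Lemma 3.1. -/
lemma inner_key (mB : B ⊗ B ⟶ B)
    (f₁ : A ⊗ B ⟶ B) (f₂ : B ⊗ A ⟶ B) (hf : IsMMor mB f₁ f₂)
    (g₁ : B ⊗ Cc ⟶ Cc) (hm₁ : Mult₁ mB g₁) (t : X ⟶ B ⊗ Cc) :
    (B ◁ ((A ◁ t) ≫ (α_ A B Cc).inv ≫ (f₁ ▷ Cc) ≫ g₁)) ≫ g₁ =
      (α_ B A X).inv ≫ (f₂ ▷ X) ≫ (B ◁ (t ≫ g₁)) ≫ g₁ := by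
  have hf' : (f₂ ▷ B) ≫ mB = (α_ B A B).hom ≫ (B ◁ f₁) ≫ mB := hf
  have hm₁' : (mB ▷ Cc) ≫ g₁ = (α_ B B Cc).hom ≫ (B ◁ g₁) ≫ g₁ := hm₁
  have e1 : (B ◁ g₁) ≫ g₁ = (α_ B B Cc).inv ≫ (mB ▷ Cc) ≫ g₁ := by
    rw [hm₁']; simp
  have e2 : (B ◁ f₁) ≫ mB = (α_ B A B).inv ≫ (f₂ ▷ B) ≫ mB := by
    rw [hf']; simp
  calc (B ◁ ((A ◁ t) ≫ (α_ A B Cc).inv ≫ (f₁ ▷ Cc) ≫ g₁)) ≫ g₁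
      = (B ◁ (A ◁ t)) ≫ (B ◁ (α_ A B Cc).inv) ≫ (B ◁ (f₁ ▷ Cc)) ≫ (B ◁ g₁) ≫ g₁ := by
        simp
    _ = (B ◁ (A ◁ t)) ≫ (B ◁ (α_ A B Cc).inv) ≫ (B ◁ (f₁ ▷ Cc)) ≫ (α_ B B Cc).inv ≫
          (mB ▷ Cc) ≫ g₁ := by
        rw [e1]
    _ = (B ◁ (A ◁ t)) ≫ (B ◁ (α_ A B Cc).inv) ≫ (α_ B (A ⊗ B) Cc).inv ≫
          (((B ◁ f₁) ≫ mB) ▷ Cc) ≫ g₁ := by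
        rw [associator_inv_naturality_middle_assoc]; simp
    _ = (B ◁ (A ◁ t)) ≫ (B ◁ (α_ A B Cc).inv) ≫ (α_ B (A ⊗ B) Cc).inv ≫
          ((α_ B A B).inv ▷ Cc) ≫ ((f₂ ▷ B) ▷ Cc) ≫ (mB ▷ Cc) ≫ g₁ := by
        rw [e2]; simp
    _ = (B ◁ (A ◁ t)) ≫ (B ◁ (α_ A B Cc).inv) ≫ (α_ B (A ⊗ B) Cc).inv ≫
          ((α_ B A B).inv ▷ Cc) ≫ ((f₂ ▷ B) ▷ Cc) ≫ (α_ B B Cc).hom ≫ (B ◁ g₁) ≫ g₁ := by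
        rw [hm₁']
    _ = (α_ B A X).inv ≫ ((B ⊗ A) ◁ t) ≫ (f₂ ▷ (B ⊗ Cc)) ≫ (B ◁ g₁) ≫ g₁ := by
        have key : (B ◁ (A ◁ t)) ≫ (B ◁ (α_ A B Cc).inv) ≫ (α_ B (A ⊗ B) Cc).inv ≫
            ((α_ B A B).inv ▷ Cc) ≫ ((f₂ ▷ B) ▷ Cc) ≫ (α_ B B Cc).hom =
            (α_ B A X).inv ≫ ((B ⊗ A) ◁ t) ≫ (f₂ ▷ (B ⊗ Cc)) := by monoidal
        rw [reassoc_of% key]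
    _ = (α_ B A X).inv ≫ (f₂ ▷ X) ≫ (B ◁ (t ≫ g₁)) ≫ g₁ := by
        rw [whisker_exchange_assoc]; simp

/-- The outer computation in Lemma 3.1: after multiplying on the left along `g₂`,
the composite depends on `t` only through `t ≫ g₁`. -/
lemma outer_key (mB : B ⊗ B ⟶ B) (mC : Cc ⊗ Cc ⟶ Cc)
    (f₁ : A ⊗ B ⟶ B) (f₂ : B ⊗ A ⟶ B) (hf : IsMMor mB f₁ f₂)
    (g₁ : B ⊗ Cc ⟶ Cc) (g₂ : Cc ⊗ B ⟶ Cc) (hg : IsMMor mC g₁ g₂)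
    (hm₁ : Mult₁ mB g₁) (t : X ⟶ B ⊗ Cc) :
    (g₂ ▷ (A ⊗ X)) ≫ (Cc ◁ ((A ◁ t) ≫ (α_ A B Cc).inv ≫ (f₁ ▷ Cc) ≫ g₁)) ≫ mC =
      (α_ Cc B (A ⊗ X)).hom ≫
        (Cc ◁ ((α_ B A X).inv ≫ (f₂ ▷ X) ≫ (B ◁ (t ≫ g₁)) ≫ g₁)) ≫ mC := by
  have hg' : (g₂ ▷ Cc) ≫ mC = (α_ Cc B Cc).hom ≫ (Cc ◁ g₁) ≫ mC := hg
  set h : A ⊗ X ⟶ Cc := (A ◁ t) ≫ (α_ A B Cc).inv ≫ (f₁ ▷ Cc) ≫ g₁ with hh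
  calc (g₂ ▷ (A ⊗ X)) ≫ (Cc ◁ h) ≫ mC
      = ((Cc ⊗ B) ◁ h) ≫ (g₂ ▷ Cc) ≫ mC := by
        rw [← whisker_exchange_assoc]
    _ = ((Cc ⊗ B) ◁ h) ≫ (α_ Cc B Cc).hom ≫ (Cc ◁ g₁) ≫ mC := by rw [hg']
    _ = (α_ Cc B (A ⊗ X)).hom ≫ (Cc ◁ (B ◁ h)) ≫ (Cc ◁ g₁) ≫ mC := by
        rw [associator_naturality_right_assoc]
    _ = (α_ Cc B (A ⊗ X)).hom ≫ (Cc ◁ ((B ◁ h) ≫ g₁)) ≫ mC := by simp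
    _ = (α_ Cc B (A ⊗ X)).hom ≫
          (Cc ◁ ((α_ B A X).inv ≫ (f₂ ▷ X) ≫ (B ◁ (t ≫ g₁)) ≫ g₁)) ≫ mC := by
        rw [hh, inner_key mB f₁ f₂ hf g₁ hm₁ t]

end Aux

/-- Lemma 3.1: given an `𝕄`-morphism `f : A ⇸ B` and a dense multiplicative
`𝕄`-morphism `g : B ⇸ C` (with `C` non-degenerate), the composite
`g₁ ∘ (f₁ ⊗ 1) ∘ (1 ⊗ s)` depends on `s : X ⟶ B ⊗ C` only through `g₁ ∘ s`. -/
theorem composite_depends_only_on (QD : QData C) {A B Cc X : C}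
    (mB : B ⊗ B ⟶ B) (mC : Cc ⊗ Cc ⟶ Cc)
    (hB : SgAssoc B mB) (hC : SgAssoc Cc mC) (hnd : NonDeg Cc mC)
    (f₁ : A ⊗ B ⟶ B) (f₂ : B ⊗ A ⟶ B) (hf : IsMMor mB f₁ f₂)
    (g₁ : B ⊗ Cc ⟶ Cc) (g₂ : Cc ⊗ B ⟶ Cc) (hg : IsMMor mC g₁ g₂)
    (hd₁ : QD.Q g₁) (hd₂ : QD.Q g₂)
    (hm₁ : Mult₁ mB g₁) (hm₂ : Mult₂ mB g₂)
    (s s' : X ⟶ B ⊗ Cc) (hs : s ≫ g₁ = s' ≫ g₁) :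
    (A ◁ s) ≫ (α_ A B Cc).inv ≫ (f₁ ▷ Cc) ≫ g₁ =
      (A ◁ s') ≫ (α_ A B Cc).inv ≫ (f₁ ▷ Cc) ≫ g₁ := by
  -- Step 1: after multiplying on the left along `g₂`, the two composites agree.
  have step1 : (g₂ ▷ (A ⊗ X)) ≫
        (Cc ◁ ((A ◁ s) ≫ (α_ A B Cc).inv ≫ (f₁ ▷ Cc) ≫ g₁)) ≫ mC =
      (g₂ ▷ (A ⊗ X)) ≫
        (Cc ◁ ((A ◁ s') ≫ (α_ A B Cc).inv ≫ (f₁ ▷ Cc) ≫ g₁)) ≫ mC := by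
    rw [outer_key mB mC f₁ f₂ hf g₁ g₂ hg hm₁ s,
        outer_key mB mC f₁ f₂ hf g₁ g₂ hg hm₁ s', hs]
  -- Step 2: cancel the epimorphism `g₂ ▷ (A ⊗ X)`.
  have hepi : Epi (g₂ ▷ (A ⊗ X)) := QD.epi_whiskerRight hd₂ (A ⊗ X)
  have step2 : (Cc ◁ ((A ◁ s) ≫ (α_ A B Cc).inv ≫ (f₁ ▷ Cc) ≫ g₁)) ≫ mC =
      (Cc ◁ ((A ◁ s') ≫ (α_ A B Cc).inv ≫ (f₁ ▷ Cc) ≫ g₁)) ≫ mC := by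
    exact (cancel_epi (g₂ ▷ (A ⊗ X))).mp (by simpa using step1)
  -- Step 3: use non-degeneracy of `mC` to cancel the left multiplication.
  have key : ∀ p : A ⊗ X ⟶ Cc,
      (Cc ◁ (p ≫ (ρ_ Cc).inv)) ≫ (α_ Cc Cc (𝟙_ C)).inv ≫ (mC ▷ (𝟙_ C)) =
        ((Cc ◁ p) ≫ mC) ≫ (ρ_ Cc).inv := by
    intro p; monoidal
  have step3 := hnd.2 (A ⊗ X) (𝟙_ C)
    (a₁ := ((A ◁ s) ≫ (α_ A B Cc).inv ≫ (f₁ ▷ Cc) ≫ g₁) ≫ (ρ_ Cc).inv)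
    (a₂ := ((A ◁ s') ≫ (α_ A B Cc).inv ≫ (f₁ ▷ Cc) ≫ g₁) ≫ (ρ_ Cc).inv)
    (by simp only [key]; rw [step2])
  have := congrArg (fun q => q ≫ (ρ_ Cc).hom) step3
  simpa using this
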